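/- Let K be a field with char K ≠ 2, k ∈ K, and ξ ∈ K with ξ ≠ 0. Suppose (y₀,z₀) ∈ K² is a point with F(ξ,y₀,z₀) = F_y(ξ,y₀,z₀) = F_z(ξ,y₀,z₀) = 0 where F(x,y,z) = x² + y² + z² + x²y²z² + k·x·y·z. Then (2ξ² - kξ - 2)(2ξ² - kξ + 2)(2ξ² + kξ - 2)(2ξ² + kξ + 2) = 0; equivalently, k = ±2(ξ ± ξ⁻¹) for some choice of signs. -/
import Mathlib


/-- The defining polynomial of the affine surface `W_k`. -/
def Fpoly {K : Type*} [Field K] (k x y z : K) : K :=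
  x ^ 2 + y ^ 2 + z ^ 2 + x ^ 2 * y ^ 2 * z ^ 2 + k * x * y * z

/-- `∂F/∂y`. -/
def Fy {K : Type*} [Field K] (k x y z : K) : K :=
  2 * y + 2 * x ^ 2 * y * z ^ 2 + k * x * z

/-- `∂F/∂z`. -/
def Fz {K : Type*} [Field K] (k x y z : K) : K :=
  2 * z + 2 * x ^ 2 * y ^ 2 * z + k * x * y

/-- If the fiber of `W_k` over `x = ξ ≠ 0` has a singular point, then
`(2ξ² - kξ - 2)(2ξ² - kξ + 2)(2ξ² + kξ - 2)(2ξ² + kξ + 2) = 0`. -/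
theorem stmt_7 {K : Type*} [Field K] (h2 : (2 : K) ≠ 0) (k ξ : K) (hξ : ξ ≠ 0)
    (y₀ z₀ : K) (hF : Fpoly k ξ y₀ z₀ = 0) (hFy : Fy k ξ y₀ z₀ = 0)
    (hFz : Fz k ξ y₀ z₀ = 0) :
    (2 * ξ ^ 2 - k * ξ - 2) * (2 * ξ ^ 2 - k * ξ + 2) *
      (2 * ξ ^ 2 + k * ξ - 2) * (2 * ξ ^ 2 + k * ξ + 2) = 0 := by
  simp only [Fpoly, Fy, Fz] at hF hFy hFz
  -- y₀² = z₀²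
  have hyz : y₀ ^ 2 = z₀ ^ 2 := by
    have h : 2 * (y₀ ^ 2 - z₀ ^ 2) = 0 := by linear_combination y₀ * hFy - z₀ * hFz
    rcases mul_eq_zero.mp h with h' | h'
    · exact absurd h' h2
    · linear_combination h'
  -- k ξ y₀ z₀ = -2ξ² - 2z₀²
  have hk : k * ξ * y₀ * z₀ = -(2 * ξ ^ 2) - 2 * z₀ ^ 2 := by
    linear_combination 2 * hF - y₀ * hFy
  -- 2ξ²(z₀⁴ - 1) = 0, hence z₀⁴ = 1
  have h4' : 2 * ξ ^ 2 * (z₀ ^ 4 - 1) = 0 := by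
    linear_combination y₀ * hFy - (2 * ξ ^ 2 * z₀ ^ 2 + 2) * hyz - hk
  have h4 : z₀ ^ 4 = 1 := by
    have hne : 2 * ξ ^ 2 ≠ 0 := mul_ne_zero h2 (pow_ne_zero 2 hξ)
    rcases mul_eq_zero.mp h4' with h' | h'
    · exact absurd h' hne
    · linear_combination h'
  have h1 : y₀ ^ 2 * z₀ ^ 2 = 1 := by
    calc y₀ ^ 2 * z₀ ^ 2 = z₀ ^ 4 := by rw [hyz]; ring
    _ = 1 := h4
  -- k²ξ² = (2ξ² + 2z₀²)²
  have hsq : (k * ξ * y₀ * z₀) ^ 2 = (-(2 * ξ ^ 2) - 2 * z₀ ^ 2) ^ 2 := by rw [hk]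
  have hkk : k ^ 2 * ξ ^ 2 = (2 * ξ ^ 2 + 2 * z₀ ^ 2) ^ 2 := by
    linear_combination hsq - k ^ 2 * ξ ^ 2 * h1
  linear_combination
    (k ^ 2 * ξ ^ 2 + (2 * ξ ^ 2 + 2 * z₀ ^ 2) ^ 2 - (2 * ξ ^ 2 - 2) ^ 2
      - (2 * ξ ^ 2 + 2) ^ 2) * hkk +
    4 * (4 * ξ ^ 2 - 2 + 2 * z₀ ^ 2) * (4 * ξ ^ 2 + 2 + 2 * z₀ ^ 2) * h4
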